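/- Let X, V, U₁,…,U_m, Y₁,…,Y_m be discrete random variables such that (Y₁,…,Y_m) ↔ X ↔ (V, U₁,…,U_m) is a Markov chain. Define for k ∈ {1,…,m}: Γ_k = Σ_{i=2}^{k} I(Y_i; V, U₁,…,U_{i-1} | Y₁,…,Y_{i-1}) + I(X; V, U₁,…,U_k | Y₁,…,Y_k) + Σ_{i=k+1}^{m} I(X; U_i | V, U₁,…,U_{i-1}, Y₁,…,Y_i). Then Γ₁ = Γ₂ = ⋯ = Γ_m. -/

import Mathlib

open scoped BigOperators Classical

/-- Probability that the random variable `f` takes the value `a`, for a finite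
probability space given by the weight function `p`. -/
noncomputable def probOf {Ω α : Type*} [Fintype Ω] (p : Ω → ℝ) (f : Ω → α) (a : α) : ℝ :=
  ∑ ω ∈ Finset.univ.filter fun ω => f ω = a, p ω

/-- Shannon entropy (natural logarithm) of a discrete random variable. -/
noncomputable def ent {Ω α : Type*} [Fintype Ω] [Fintype α] (p : Ω → ℝ) (f : Ω → α) : ℝ :=
  -∑ a : α, probOf p f a * Real.log (probOf p f a)

/-- Conditional entropy H(X | Z). -/
noncomputable def condEnt {Ω α γ : Type*} [Fintype Ω] [Fintype α] [Fintype γ]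
    (p : Ω → ℝ) (X : Ω → α) (Z : Ω → γ) : ℝ :=
  ent p (fun ω => (X ω, Z ω)) - ent p Z

/-- Conditional mutual information I(X ; Y | Z). -/
noncomputable def cmi {Ω α β γ : Type*} [Fintype Ω] [Fintype α] [Fintype β] [Fintype γ]
    (p : Ω → ℝ) (X : Ω → α) (Y : Ω → β) (Z : Ω → γ) : ℝ :=
  ent p (fun ω => (X ω, Z ω)) + ent p (fun ω => (Y ω, Z ω))
    - ent p (fun ω => (X ω, Y ω, Z ω)) - ent p Z

/-- Mutual information I(X ; Y). -/
noncomputable def mi {Ω α β : Type*} [Fintype Ω] [Fintype α] [Fintype β]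
    (p : Ω → ℝ) (X : Ω → α) (Y : Ω → β) : ℝ :=
  cmi p X Y (fun _ => (() : Unit))

/-- `X` and `Y` are conditionally independent given `Z` (Markov chain X ↔ Z ↔ Y). -/
def CondIndepRV {Ω α β γ : Type*} [Fintype Ω]
    (p : Ω → ℝ) (X : Ω → α) (Y : Ω → β) (Z : Ω → γ) : Prop :=
  ∀ (a : α) (b : β) (c : γ),
    probOf p (fun ω => (X ω, Y ω, Z ω)) (a, b, c) * probOf p Z c =
      probOf p (fun ω => (X ω, Z ω)) (a, c) * probOf p (fun ω => (Y ω, Z ω)) (b, c)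

/-- The first `i` coordinates of a tuple of random variables, as a single random
variable (the remaining coordinates are masked by `none`). -/
noncomputable def preRV {Ω α : Type*} {m : ℕ} (U : Fin m → Ω → α) (i : ℕ) :
    Ω → (Fin m → Option α) :=
  fun ω j => if (j : ℕ) < i then some (U j ω) else none

/-- The quantity `Γ_k` from the proof of Theorem 6 (comparison with the minimax bound).
Indices are 0-based: `Γ k` corresponds to `Γ_k` with `k ∈ {1,…,m}` in the paper. -/
noncomputable def GammaRD {Ω 𝒳 𝒱 𝒰 𝒴 : Type*} [Fintype Ω] [Fintype 𝒳] [Fintype 𝒱]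
    [Fintype 𝒰] [Fintype 𝒴] {m : ℕ}
    (p : Ω → ℝ) (X : Ω → 𝒳) (V : Ω → 𝒱) (U : Fin m → Ω → 𝒰) (Y : Fin m → Ω → 𝒴)
    (k : ℕ) : ℝ :=
  (∑ i : Fin m, if 1 ≤ (i : ℕ) ∧ (i : ℕ) < k then
      cmi p (Y i) (fun ω => (V ω, preRV U (i : ℕ) ω)) (preRV Y (i : ℕ)) else 0)
  + cmi p X (fun ω => (V ω, preRV U k ω)) (preRV Y k)
  + (∑ i : Fin m, if k ≤ (i : ℕ) then
      cmi p X (U i) (fun ω => (V ω, preRV U (i : ℕ) ω, preRV Y ((i : ℕ) + 1) ω)) else 0)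

lemma probOf_nonneg {Ω α : Type*} [Fintype Ω] (p : Ω → ℝ) (hp0 : ∀ ω, 0 ≤ p ω)
    (f : Ω → α) (a : α) : 0 ≤ probOf p f a :=
  Finset.sum_nonneg fun ω _ => hp0 ω

lemma probOf_comp {Ω α β : Type*} [Fintype Ω] [Fintype α] (p : Ω → ℝ)
    (F : Ω → α) (g : α → β) (b : β) :
    probOf p (fun ω => g (F ω)) b = ∑ a : α, if g a = b then probOf p F a else 0 := by
  classical
  simp only [probOf, Finset.sum_filter]
  have h : ∀ x : α, (if g x = b then ∑ a : Ω, if F a = x then p a else 0 else 0)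
      = ∑ a : Ω, if F a = x ∧ g x = b then p a else 0 := by
    intro x
    split <;> rename_i h <;> simp [h]
  simp only [h]
  rw [Finset.sum_comm]
  refine Finset.sum_congr rfl fun ω _ => ?_
  simp only [ite_and]
  rw [Finset.sum_ite_eq Finset.univ (F ω) (fun x => if g x = b then p ω else 0)]
  simp

section marg
variable {Ω α β γ : Type*} [Fintype Ω] [Fintype α] [Fintype β] [Fintype γ]
  (p : Ω → ℝ) (A : Ω → α) (B : Ω → β) (Z : Ω → γ)

lemma marg_AZ (a : α) (c : γ) : probOf p (fun ω => (A ω, Z ω)) (a, c)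
    = ∑ b : β, probOf p (fun ω => (A ω, B ω, Z ω)) (a, b, c) := by
  have := probOf_comp p (fun ω => (A ω, B ω, Z ω)) (fun t => (t.1, t.2.2)) (a, c)
  simp only at this
  rw [this, Fintype.sum_prod_type]
  simp [Prod.ext_iff, ite_and, Finset.sum_ite_eq', Fintype.sum_prod_type, Finset.sum_comm]

lemma marg_BZ (b : β) (c : γ) : probOf p (fun ω => (B ω, Z ω)) (b, c)
    = ∑ a : α, probOf p (fun ω => (A ω, B ω, Z ω)) (a, b, c) := by
  have := probOf_comp p (fun ω => (A ω, B ω, Z ω)) (fun t => (t.2.1, t.2.2)) (b, c)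
  simp only at this
  rw [this, Fintype.sum_prod_type]
  simp [Prod.ext_iff, ite_and, Finset.sum_ite_eq', Fintype.sum_prod_type]

lemma marg_Z (c : γ) : probOf p Z c
    = ∑ a : α, ∑ b : β, probOf p (fun ω => (A ω, B ω, Z ω)) (a, b, c) := by
  have := probOf_comp p (fun ω => (A ω, B ω, Z ω)) (fun t => t.2.2) c
  simp only at this
  rw [this, Fintype.sum_prod_type]
  simp [Fintype.sum_prod_type, Finset.sum_ite_eq']
end marg

lemma sum_mul_comp {Ω α δ : Type*} [Fintype Ω] [Fintype α] [Fintype δ] (p : Ω → ℝ)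
    (F : Ω → α) (g : α → δ) (φ : δ → ℝ) :
    ∑ b : δ, probOf p (fun ω => g (F ω)) b * φ b = ∑ a : α, probOf p F a * φ (g a) := by
  classical
  simp only [probOf_comp p F g]
  simp only [Finset.sum_mul, ite_mul, zero_mul]
  rw [Finset.sum_comm]
  refine Finset.sum_congr rfl fun a _ => ?_
  have : ∀ b : δ, (if g a = b then probOf p F a * φ b else 0)
      = (if g a = b then probOf p F a * φ (g a) else 0) := by
    intro b; split <;> rename_i hb <;> simp [hb]
  simp only [this]
  simp [Finset.sum_ite_eq]

lemma ent_comp_expand {Ω α δ : Type*} [Fintype Ω] [Fintype α] [Fintype δ] (p : Ω → ℝ)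
    (F : Ω → α) (g : α → δ) :
    ent p (fun ω => g (F ω))
      = -∑ a : α, probOf p F a * Real.log (probOf p (fun ω => g (F ω)) (g a)) := by
  unfold ent
  rw [sum_mul_comp p F g (fun b => Real.log (probOf p (fun ω => g (F ω)) b))]

lemma cmi_eq_zero {Ω α β γ : Type*} [Fintype Ω] [Fintype α] [Fintype β] [Fintype γ]
    (p : Ω → ℝ) (hp0 : ∀ ω, 0 ≤ p ω) (A : Ω → α) (B : Ω → β) (Z : Ω → γ)
    (h : CondIndepRV p A B Z) : cmi p A B Z = 0 := by
  classical
  set F : Ω → α × β × γ := fun ω => (A ω, B ω, Z ω) with hF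
  set P : α × β × γ → ℝ := probOf p F with hP
  have hPnn : ∀ t, 0 ≤ P t := fun t => probOf_nonneg p hp0 _ t
  have eABZ : ent p F = -∑ t : α × β × γ, P t * Real.log (P t) := rfl
  have eAZ : ent p (fun ω => (A ω, Z ω))
      = -∑ t : α × β × γ, P t * Real.log (probOf p (fun ω => (A ω, Z ω)) (t.1, t.2.2)) := by
    have := ent_comp_expand p F (fun t => (t.1, t.2.2))
    simpa [hF] using this
  have eBZ : ent p (fun ω => (B ω, Z ω))
      = -∑ t : α × β × γ, P t * Real.log (probOf p (fun ω => (B ω, Z ω)) (t.2.1, t.2.2)) := by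
    have := ent_comp_expand p F (fun t => (t.2.1, t.2.2))
    simpa [hF] using this
  have eZ : ent p Z
      = -∑ t : α × β × γ, P t * Real.log (probOf p Z t.2.2) := by
    have := ent_comp_expand p F (fun t => t.2.2)
    simpa [hF] using this
  unfold cmi
  rw [show (fun ω => (A ω, B ω, Z ω)) = F from rfl, eABZ, eAZ, eBZ, eZ]
  rw [show ∀ x y z w : ℝ, -x + -y - -z - -w = -((x + y) - (z + w)) from fun _ _ _ _ => by ring]
  rw [← Finset.sum_add_distrib, ← Finset.sum_add_distrib, ← Finset.sum_sub_distrib]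
  rw [neg_eq_zero]
  refine Finset.sum_eq_zero fun t _ => ?_
  obtain ⟨a, b, c⟩ := t
  simp only
  rcases eq_or_lt_of_le (hPnn (a, b, c)) with hP0 | hPpos
  · rw [← hP0]; ring
  · have hZge : P (a, b, c) ≤ probOf p Z c := by
      rw [marg_Z p A B Z c]
      calc P (a, b, c) ≤ ∑ b' : β, P (a, b', c) :=
            Finset.single_le_sum (fun b' _ => hPnn (a, b', c)) (Finset.mem_univ b)
        _ ≤ ∑ a' : α, ∑ b' : β, P (a', b', c) :=
            Finset.single_le_sum (fun a' _ => Finset.sum_nonneg fun b' _ => hPnn (a', b', c))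
              (Finset.mem_univ a)
    have hZpos : 0 < probOf p Z c := lt_of_lt_of_le hPpos hZge
    have hprod : 0 < probOf p (fun ω => (A ω, Z ω)) (a, c) *
        probOf p (fun ω => (B ω, Z ω)) (b, c) := by
      rw [← h a b c]; exact mul_pos hPpos hZpos
    have hA0 : probOf p (fun ω => (A ω, Z ω)) (a, c) ≠ 0 := by
      intro h0; rw [h0] at hprod; simp at hprod
    have hB0 : probOf p (fun ω => (B ω, Z ω)) (b, c) ≠ 0 := by
      intro h0; rw [h0] at hprod; simp at hprod
    have hlog : Real.log (probOf p (fun ω => (A ω, Z ω)) (a, c))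
        + Real.log (probOf p (fun ω => (B ω, Z ω)) (b, c))
        = Real.log (P (a, b, c)) + Real.log (probOf p Z c) := by
      rw [← Real.log_mul hA0 hB0, ← h a b c, Real.log_mul (ne_of_gt hPpos) (ne_of_gt hZpos)]
    nlinarith [hlog]

lemma condIndep_comp {Ω α β γ α' β' : Type*} [Fintype Ω] [Fintype α] [Fintype β] [Fintype γ]
    [Fintype α'] [Fintype β'] (p : Ω → ℝ) (A : Ω → α) (B : Ω → β) (Z : Ω → γ)
    (f : α → α') (g : β → β') (h : CondIndepRV p A B Z) :
    CondIndepRV p (fun ω => f (A ω)) (fun ω => g (B ω)) Z := by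
  classical
  intro a' b' c
  set F : Ω → α × β × γ := fun ω => (A ω, B ω, Z ω) with hF
  set P : α × β × γ → ℝ := probOf p F with hP
  have lhs1 : probOf p (fun ω => (f (A ω), g (B ω), Z ω)) (a', b', c)
      = ∑ a : α, ∑ b : β, (if f a = a' ∧ g b = b' then P (a, b, c) else 0) := by
    have := probOf_comp p F (fun t => (f t.1, g t.2.1, t.2.2)) (a', b', c)
    simp only [hF] at this
    rw [this, Fintype.sum_prod_type]
    refine Finset.sum_congr rfl fun a _ => ?_
    rw [Fintype.sum_prod_type]
    refine Finset.sum_congr rfl fun b _ => ?_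
    simp [Prod.ext_iff, ite_and, Finset.sum_ite_eq, hP, hF]
  have lhs2 : probOf p (fun ω => (f (A ω), Z ω)) (a', c)
      = ∑ a : α, (if f a = a' then probOf p (fun ω => (A ω, Z ω)) (a, c) else 0) := by
    have := probOf_comp p (fun ω => (A ω, Z ω)) (fun t => (f t.1, t.2)) (a', c)
    simp only at this
    rw [this, Fintype.sum_prod_type]
    refine Finset.sum_congr rfl fun a _ => ?_
    simp [Prod.ext_iff, ite_and, Finset.sum_ite_eq]
  have lhs3 : probOf p (fun ω => (g (B ω), Z ω)) (b', c)
      = ∑ b : β, (if g b = b' then probOf p (fun ω => (B ω, Z ω)) (b, c) else 0) := by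
    have := probOf_comp p (fun ω => (B ω, Z ω)) (fun t => (g t.1, t.2)) (b', c)
    simp only at this
    rw [this, Fintype.sum_prod_type]
    refine Finset.sum_congr rfl fun b _ => ?_
    simp [Prod.ext_iff, ite_and, Finset.sum_ite_eq]
  rw [lhs1, lhs2, lhs3, Finset.sum_mul_sum]
  rw [Finset.sum_mul]
  refine Finset.sum_congr rfl fun a _ => ?_
  rw [Finset.sum_mul]
  refine Finset.sum_congr rfl fun b _ => ?_
  by_cases hfa : f a = a' <;> by_cases hgb : g b = b' <;>
    simp [hfa, hgb, h a b c, hP, hF]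

lemma probOf_eq_zero {Ω α : Type*} [Fintype Ω] (p : Ω → ℝ) (F : Ω → α) (a : α)
    (h : ∀ ω, F ω ≠ a) : probOf p F a = 0 := by
  unfold probOf
  rw [Finset.filter_false_of_mem (by simpa using h)]
  simp


/-- Entropy is unchanged by composing with a map injective on the range. -/
lemma ent_comp_injOn {Ω α β : Type*} [Fintype Ω] [Fintype α] [Fintype β] (p : Ω → ℝ)
    (F : Ω → α) (g : α → β)
    (hg : ∀ ω ω', g (F ω) = g (F ω') → F ω = F ω') :
    ent p (fun ω => g (F ω)) = ent p F := by
  classical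
  unfold ent
  congr 1
  have key : ∀ ω₀ : Ω, probOf p (fun ω => g (F ω)) (g (F ω₀)) = probOf p F (F ω₀) := by
    intro ω₀
    unfold probOf
    refine Finset.sum_congr ?_ fun _ _ => rfl
    ext ω
    simp only [Finset.mem_filter, Finset.mem_univ, true_and]
    exact ⟨fun h => hg _ _ h, fun h => by rw [h]⟩
  set S : Finset α := Finset.univ.image F with hS
  have h1 : ∑ a : α, probOf p F a * Real.log (probOf p F a)
      = ∑ a ∈ S, probOf p F a * Real.log (probOf p F a) := by
    refine (Finset.sum_subset (Finset.subset_univ _) ?_).symm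
    intro a _ ha
    have : probOf p F a = 0 := probOf_eq_zero p F a (by
      intro ω hω; exact ha (Finset.mem_image.2 ⟨ω, Finset.mem_univ ω, hω⟩))
    simp [this]
  have h2 : ∑ b : β, probOf p (fun ω => g (F ω)) b * Real.log (probOf p (fun ω => g (F ω)) b)
      = ∑ b ∈ S.image g, probOf p (fun ω => g (F ω)) b * Real.log (probOf p (fun ω => g (F ω)) b) := by
    refine (Finset.sum_subset (Finset.subset_univ _) ?_).symm
    intro b _ hb
    have : probOf p (fun ω => g (F ω)) b = 0 := probOf_eq_zero p _ b (by
      intro ω hω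
      exact hb (Finset.mem_image.2 ⟨F ω, Finset.mem_image.2 ⟨ω, Finset.mem_univ ω, rfl⟩, hω⟩))
    simp [this]
  have hinj : ∀ x ∈ S, ∀ y ∈ S, g x = g y → x = y := by
    intro x hx y hy h
    simp only [hS, Finset.mem_image] at hx hy
    obtain ⟨ω, _, rfl⟩ := hx; obtain ⟨ω', _, rfl⟩ := hy
    exact hg _ _ h
  rw [h1, h2, Finset.sum_image hinj]
  refine Finset.sum_congr rfl fun a ha => ?_
  simp only [hS, Finset.mem_image] at ha
  obtain ⟨ω, _, rfl⟩ := ha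
  rw [key ω]

noncomputable def insertAt {m : ℕ} {α : Type*} (k : ℕ) (x : α) (q : Fin m → Option α) :
    Fin m → Option α :=
  fun j => if (j : ℕ) = k then some x else q j

lemma preRV_succ {Ω α : Type*} {m : ℕ} (W : Fin m → Ω → α) (k : ℕ) (hk : k < m) :
    preRV W (k+1) = fun ω => insertAt k (W ⟨k, hk⟩ ω) (preRV W k ω) := by
  funext ω j
  simp only [preRV, insertAt]
  by_cases h1 : (j : ℕ) = k
  · have : j = ⟨k, hk⟩ := Fin.ext h1
    subst this
    simp
  · by_cases h2 : (j : ℕ) < k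
    · rw [if_pos (by omega : (j : ℕ) < k + 1), if_neg h1, if_pos h2]
    · rw [if_neg (by omega : ¬ (j : ℕ) < k + 1), if_neg h1, if_neg h2]

lemma preRV_self {Ω α : Type*} {m : ℕ} (W : Fin m → Ω → α) (k : ℕ) (hk : k < m) (ω : Ω) :
    preRV W k ω ⟨k, hk⟩ = none := by
  simp [preRV]

lemma insertAt_cancel {α : Type*} {m : ℕ} (k : ℕ) (hk : k < m) (x x' : α)
    (q q' : Fin m → Option α) (hq : q ⟨k, hk⟩ = none) (hq' : q' ⟨k, hk⟩ = none)
    (h : insertAt k x q = insertAt k x' q') : x = x' ∧ q = q' := by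
  have h1 := congrFun h ⟨k, hk⟩
  simp only [insertAt] at h1
  simp at h1
  refine ⟨h1, funext fun j => ?_⟩
  by_cases hj : (j : ℕ) = k
  · have : j = ⟨k, hk⟩ := Fin.ext hj
    rw [this, hq, hq']
  · have := congrFun h j
    simpa [insertAt, hj] using this

lemma ins_inj {Ω α : Type*} {m : ℕ} (W : Fin m → Ω → α) (k : ℕ) (hk : k < m) (ω ω' : Ω)
    (h : insertAt k (W ⟨k, hk⟩ ω) (preRV W k ω) = insertAt k (W ⟨k, hk⟩ ω') (preRV W k ω')) :
    W ⟨k, hk⟩ ω = W ⟨k, hk⟩ ω' ∧ preRV W k ω = preRV W k ω' :=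
  insertAt_cancel k hk _ _ _ _ (preRV_self W k hk ω) (preRV_self W k hk ω') h

lemma core_identity {Ω 𝒳 𝒱 𝒰 𝒴 : Type*} [Fintype Ω] [Fintype 𝒳] [Fintype 𝒱]
    [Fintype 𝒰] [Fintype 𝒴] {m : ℕ}
    (p : Ω → ℝ) (hp0 : ∀ ω, 0 ≤ p ω)
    (X : Ω → 𝒳) (V : Ω → 𝒱) (U : Fin m → Ω → 𝒰) (Y : Fin m → Ω → 𝒴)
    (hMarkov : CondIndepRV p (fun ω (i : Fin m) => Y i ω)
      (fun ω => (V ω, fun i : Fin m => U i ω)) X)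
    (k : ℕ) (hk : k < m) :
    cmi p (Y ⟨k, hk⟩) (fun ω => (V ω, preRV U k ω)) (preRV Y k)
      + cmi p X (fun ω => (V ω, preRV U (k+1) ω)) (preRV Y (k+1))
    = cmi p X (fun ω => (V ω, preRV U k ω)) (preRV Y k)
      + cmi p X (U ⟨k, hk⟩) (fun ω => (V ω, preRV U k ω, preRV Y (k+1) ω)) := by
  classical
  have hT1 : ent p (fun ω => (X ω, insertAt k (Y ⟨k, hk⟩ ω) (preRV Y k ω)))
      = ent p (fun ω => (X ω, Y ⟨k, hk⟩ ω, preRV Y k ω)) := by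
    refine ent_comp_injOn p (fun ω => (X ω, Y ⟨k, hk⟩ ω, preRV Y k ω))
      (fun t => (t.1, insertAt k t.2.1 t.2.2)) ?_
    intro ω ω' h
    simp only [Prod.mk.injEq] at h ⊢
    obtain ⟨hX, hY⟩ := h
    obtain ⟨hY1, hY2⟩ := ins_inj Y k hk ω ω' hY
    exact ⟨hX, hY1, hY2⟩
  have hT2 : ent p (fun ω => ((V ω, insertAt k (U ⟨k, hk⟩ ω) (preRV U k ω)),
        insertAt k (Y ⟨k, hk⟩ ω) (preRV Y k ω)))
      = ent p (fun ω => (Y ⟨k, hk⟩ ω, (V ω, preRV U k ω), U ⟨k, hk⟩ ω, preRV Y k ω)) := by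
    refine ent_comp_injOn p
      (fun ω => (Y ⟨k, hk⟩ ω, (V ω, preRV U k ω), U ⟨k, hk⟩ ω, preRV Y k ω))
      (fun t => ((t.2.1.1, insertAt k t.2.2.1 t.2.1.2), insertAt k t.1 t.2.2.2)) ?_
    intro ω ω' h
    simp only [Prod.mk.injEq] at h ⊢
    obtain ⟨⟨hV, hU⟩, hY⟩ := h
    obtain ⟨hU1, hU2⟩ := ins_inj U k hk ω ω' hU
    obtain ⟨hY1, hY2⟩ := ins_inj Y k hk ω ω' hY
    exact ⟨hY1, ⟨hV, hU2⟩, hU1, hY2⟩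
  have hT3 : ent p (fun ω => (X ω, (V ω, insertAt k (U ⟨k, hk⟩ ω) (preRV U k ω)),
        insertAt k (Y ⟨k, hk⟩ ω) (preRV Y k ω)))
      = ent p (fun ω => (X ω, Y ⟨k, hk⟩ ω, (V ω, preRV U k ω), U ⟨k, hk⟩ ω, preRV Y k ω)) := by
    refine ent_comp_injOn p
      (fun ω => (X ω, Y ⟨k, hk⟩ ω, (V ω, preRV U k ω), U ⟨k, hk⟩ ω, preRV Y k ω))
      (fun t => (t.1, (t.2.2.1.1, insertAt k t.2.2.2.1 t.2.2.1.2),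
        insertAt k t.2.1 t.2.2.2.2)) ?_
    intro ω ω' h
    simp only [Prod.mk.injEq] at h ⊢
    obtain ⟨hX, ⟨hV, hU⟩, hY⟩ := h
    obtain ⟨hU1, hU2⟩ := ins_inj U k hk ω ω' hU
    obtain ⟨hY1, hY2⟩ := ins_inj Y k hk ω ω' hY
    exact ⟨hX, hY1, ⟨hV, hU2⟩, hU1, hY2⟩
  have hT4 : ent p (fun ω => insertAt k (Y ⟨k, hk⟩ ω) (preRV Y k ω))
      = ent p (fun ω => (Y ⟨k, hk⟩ ω, preRV Y k ω)) := by
    refine ent_comp_injOn p (fun ω => (Y ⟨k, hk⟩ ω, preRV Y k ω))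
      (fun t => insertAt k t.1 t.2) ?_
    intro ω ω' h
    have h2 := ins_inj Y k hk ω ω' h
    exact Prod.ext_iff.2 ⟨h2.1, h2.2⟩
  have hT5 : ent p (fun ω => (X ω, V ω, preRV U k ω, insertAt k (Y ⟨k, hk⟩ ω) (preRV Y k ω)))
      = ent p (fun ω => (X ω, Y ⟨k, hk⟩ ω, (V ω, preRV U k ω), preRV Y k ω)) := by
    refine ent_comp_injOn p
      (fun ω => (X ω, Y ⟨k, hk⟩ ω, (V ω, preRV U k ω), preRV Y k ω))
      (fun t => (t.1, t.2.2.1.1, t.2.2.1.2, insertAt k t.2.1 t.2.2.2)) ?_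
    intro ω ω' h
    simp only [Prod.mk.injEq] at h ⊢
    obtain ⟨hX, hV, hU, hY⟩ := h
    obtain ⟨hY1, hY2⟩ := ins_inj Y k hk ω ω' hY
    exact ⟨hX, hY1, ⟨hV, hU⟩, hY2⟩
  have hT6 : ent p (fun ω => (U ⟨k, hk⟩ ω, V ω, preRV U k ω,
        insertAt k (Y ⟨k, hk⟩ ω) (preRV Y k ω)))
      = ent p (fun ω => (Y ⟨k, hk⟩ ω, (V ω, preRV U k ω), U ⟨k, hk⟩ ω, preRV Y k ω)) := by
    refine ent_comp_injOn p
      (fun ω => (Y ⟨k, hk⟩ ω, (V ω, preRV U k ω), U ⟨k, hk⟩ ω, preRV Y k ω))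
      (fun t => (t.2.2.1, t.2.1.1, t.2.1.2, insertAt k t.1 t.2.2.2)) ?_
    intro ω ω' h
    simp only [Prod.mk.injEq] at h ⊢
    obtain ⟨hB, hV, hU, hY⟩ := h
    obtain ⟨hY1, hY2⟩ := ins_inj Y k hk ω ω' hY
    exact ⟨hY1, ⟨hV, hU⟩, hB, hY2⟩
  have hT7 : ent p (fun ω => (X ω, U ⟨k, hk⟩ ω, V ω, preRV U k ω,
        insertAt k (Y ⟨k, hk⟩ ω) (preRV Y k ω)))
      = ent p (fun ω => (X ω, Y ⟨k, hk⟩ ω, (V ω, preRV U k ω), U ⟨k, hk⟩ ω, preRV Y k ω)) := by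
    refine ent_comp_injOn p
      (fun ω => (X ω, Y ⟨k, hk⟩ ω, (V ω, preRV U k ω), U ⟨k, hk⟩ ω, preRV Y k ω))
      (fun t => (t.1, t.2.2.2.1, t.2.2.1.1, t.2.2.1.2, insertAt k t.2.1 t.2.2.2.2)) ?_
    intro ω ω' h
    simp only [Prod.mk.injEq] at h ⊢
    obtain ⟨hX, hB, hV, hU, hY⟩ := h
    obtain ⟨hY1, hY2⟩ := ins_inj Y k hk ω ω' hY
    exact ⟨hX, hY1, ⟨hV, hU⟩, hB, hY2⟩
  have hT8 : ent p (fun ω => (V ω, preRV U k ω, insertAt k (Y ⟨k, hk⟩ ω) (preRV Y k ω)))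
      = ent p (fun ω => (Y ⟨k, hk⟩ ω, (V ω, preRV U k ω), preRV Y k ω)) := by
    refine ent_comp_injOn p
      (fun ω => (Y ⟨k, hk⟩ ω, (V ω, preRV U k ω), preRV Y k ω))
      (fun t => (t.2.1.1, t.2.1.2, insertAt k t.1 t.2.2)) ?_
    intro ω ω' h
    simp only [Prod.mk.injEq] at h ⊢
    obtain ⟨hV, hU, hY⟩ := h
    obtain ⟨hY1, hY2⟩ := ins_inj Y k hk ω ω' hY
    exact ⟨hY1, ⟨hV, hU⟩, hY2⟩
  have hZa : ent p (fun ω => ((Y ⟨k, hk⟩ ω, preRV Y k ω), X ω))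
      = ent p (fun ω => (X ω, Y ⟨k, hk⟩ ω, preRV Y k ω)) := by
    refine ent_comp_injOn p (fun ω => (X ω, Y ⟨k, hk⟩ ω, preRV Y k ω))
      (fun t => ((t.2.1, t.2.2), t.1)) ?_
    intro ω ω' h
    simp only [Prod.mk.injEq] at h ⊢
    obtain ⟨⟨h1, h2⟩, h3⟩ := h
    exact ⟨h3, h1, h2⟩
  have hZb : ent p (fun ω => ((Y ⟨k, hk⟩ ω, preRV Y k ω), (V ω, preRV U k ω), X ω))
      = ent p (fun ω => (X ω, Y ⟨k, hk⟩ ω, (V ω, preRV U k ω), preRV Y k ω)) := by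
    refine ent_comp_injOn p
      (fun ω => (X ω, Y ⟨k, hk⟩ ω, (V ω, preRV U k ω), preRV Y k ω))
      (fun t => ((t.2.1, t.2.2.2), t.2.2.1, t.1)) ?_
    intro ω ω' h
    simp only [Prod.mk.injEq] at h ⊢
    obtain ⟨⟨h1, h2⟩, ⟨h3, h4⟩, h5⟩ := h
    exact ⟨h5, h1, ⟨h3, h4⟩, h2⟩
  have hZc : ent p (fun ω => (preRV Y k ω, X ω))
      = ent p (fun ω => (X ω, preRV Y k ω)) := by
    refine ent_comp_injOn p (fun ω => (X ω, preRV Y k ω)) (fun t => (t.2, t.1)) ?_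
    intro ω ω' h
    simp only [Prod.mk.injEq] at h ⊢
    exact ⟨h.2, h.1⟩
  have hZd : ent p (fun ω => (preRV Y k ω, (V ω, preRV U k ω), X ω))
      = ent p (fun ω => (X ω, (V ω, preRV U k ω), preRV Y k ω)) := by
    refine ent_comp_injOn p (fun ω => (X ω, (V ω, preRV U k ω), preRV Y k ω))
      (fun t => (t.2.2, t.2.1, t.1)) ?_
    intro ω ω' h
    simp only [Prod.mk.injEq] at h ⊢
    obtain ⟨h1, ⟨h2, h3⟩, h4⟩ := h
    exact ⟨h4, ⟨h2, h3⟩, h1⟩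
  have Z1 : cmi p (fun ω => (Y ⟨k, hk⟩ ω, preRV Y k ω)) (fun ω => (V ω, preRV U k ω)) X = 0 := by
    exact cmi_eq_zero p hp0 _ _ _
      (condIndep_comp p (fun ω (i : Fin m) => Y i ω) (fun ω => (V ω, fun i : Fin m => U i ω)) X
        (fun yv => (yv ⟨k, hk⟩, fun j : Fin m => if (j : ℕ) < k then some (yv j) else none))
        (fun t => (t.1, fun j : Fin m => if (j : ℕ) < k then some (t.2 j) else none)) hMarkov)
  have Z2 : cmi p (preRV Y k) (fun ω => (V ω, preRV U k ω)) X = 0 := by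
    exact cmi_eq_zero p hp0 _ _ _
      (condIndep_comp p (fun ω (i : Fin m) => Y i ω) (fun ω => (V ω, fun i : Fin m => U i ω)) X
        (fun yv => fun j : Fin m => if (j : ℕ) < k then some (yv j) else none)
        (fun t => (t.1, fun j : Fin m => if (j : ℕ) < k then some (t.2 j) else none)) hMarkov)
  simp only [cmi] at Z1 Z2 ⊢
  simp only [preRV_succ U k hk, preRV_succ Y k hk]
  rw [hZa, hZb] at Z1
  rw [hZc, hZd] at Z2
  rw [hT1, hT2, hT3, hT4, hT5, hT6, hT7, hT8]
  linarith [Z1, Z2]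

lemma gamma_step {Ω 𝒳 𝒱 𝒰 𝒴 : Type*} [Fintype Ω] [Fintype 𝒳] [Fintype 𝒱]
    [Fintype 𝒰] [Fintype 𝒴] {m : ℕ}
    (p : Ω → ℝ) (hp0 : ∀ ω, 0 ≤ p ω)
    (X : Ω → 𝒳) (V : Ω → 𝒱) (U : Fin m → Ω → 𝒰) (Y : Fin m → Ω → 𝒴)
    (hMarkov : CondIndepRV p (fun ω (i : Fin m) => Y i ω)
      (fun ω => (V ω, fun i : Fin m => U i ω)) X)
    (k : ℕ) (hk1 : 1 ≤ k) (hk : k < m) :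
    GammaRD p X V U Y (k+1) = GammaRD p X V U Y k := by
  classical
  set T : Fin m → ℝ := fun i =>
    cmi p (Y i) (fun ω => (V ω, preRV U (i : ℕ) ω)) (preRV Y (i : ℕ)) with hT
  set S : Fin m → ℝ := fun i =>
    cmi p X (U i) (fun ω => (V ω, preRV U (i : ℕ) ω, preRV Y ((i : ℕ) + 1) ω)) with hS
  have hsum1 : (∑ i : Fin m, if 1 ≤ (i : ℕ) ∧ (i : ℕ) < k + 1 then T i else 0)
      = (∑ i : Fin m, if 1 ≤ (i : ℕ) ∧ (i : ℕ) < k then T i else 0) + T ⟨k, hk⟩ := by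
    have key : ∀ i : Fin m, (if 1 ≤ (i : ℕ) ∧ (i : ℕ) < k + 1 then T i else 0)
        = (if 1 ≤ (i : ℕ) ∧ (i : ℕ) < k then T i else 0)
          + (if i = ⟨k, hk⟩ then T i else 0) := by
      intro i
      by_cases h1 : i = ⟨k, hk⟩
      · subst h1
        rw [if_pos (by simp; omega), if_neg (by simp), if_pos rfl]
        ring
      · have hik : (i : ℕ) ≠ k := fun hh => h1 (Fin.ext hh)
        rw [if_neg h1]
        by_cases h2 : 1 ≤ (i : ℕ) ∧ (i : ℕ) < k
        · rw [if_pos ⟨h2.1, by omega⟩, if_pos h2]; ring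
        · rw [if_neg (by omega), if_neg h2]; ring
    rw [Finset.sum_congr rfl fun i _ => key i, Finset.sum_add_distrib,
      Finset.sum_ite_eq' Finset.univ (⟨k, hk⟩ : Fin m) T]
    simp
  have hsum3 : (∑ i : Fin m, if k ≤ (i : ℕ) then S i else 0)
      = (∑ i : Fin m, if k + 1 ≤ (i : ℕ) then S i else 0) + S ⟨k, hk⟩ := by
    have key : ∀ i : Fin m, (if k ≤ (i : ℕ) then S i else 0)
        = (if k + 1 ≤ (i : ℕ) then S i else 0)
          + (if i = ⟨k, hk⟩ then S i else 0) := by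
      intro i
      by_cases h1 : i = ⟨k, hk⟩
      · subst h1
        rw [if_pos (by simp), if_neg (by simp), if_pos rfl]
        ring
      · have hik : (i : ℕ) ≠ k := fun hh => h1 (Fin.ext hh)
        rw [if_neg h1]
        by_cases h2 : k + 1 ≤ (i : ℕ)
        · rw [if_pos (by omega), if_pos h2]; ring
        · rw [if_neg (by omega), if_neg h2]; ring
    rw [Finset.sum_congr rfl fun i _ => key i, Finset.sum_add_distrib,
      Finset.sum_ite_eq' Finset.univ (⟨k, hk⟩ : Fin m) S]
    simp
  have hcore := core_identity p hp0 X V U Y hMarkov k hk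
  have hTk : T ⟨k, hk⟩
      = cmi p (Y ⟨k, hk⟩) (fun ω => (V ω, preRV U k ω)) (preRV Y k) := by
    simp [hT]
  have hSk : S ⟨k, hk⟩
      = cmi p X (U ⟨k, hk⟩) (fun ω => (V ω, preRV U k ω, preRV Y (k + 1) ω)) := by
    simp [hS]
  unfold GammaRD
  rw [hsum1, hsum3]
  rw [hTk, hSk] at *
  linarith [hcore]

/-- under the Markov chain `(Y₁,…,Y_m) ↔ X ↔ (V, U₁,…,U_m)`,
the quantities `Γ₁ = Γ₂ = ⋯ = Γ_m` all coincide. -/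
theorem stmt_4 {Ω 𝒳 𝒱 𝒰 𝒴 : Type*} [Fintype Ω] [Fintype 𝒳] [Fintype 𝒱]
    [Fintype 𝒰] [Fintype 𝒴] (m : ℕ)
    (p : Ω → ℝ) (hp0 : ∀ ω, 0 ≤ p ω) (hp1 : ∑ ω, p ω = 1)
    (X : Ω → 𝒳) (V : Ω → 𝒱) (U : Fin m → Ω → 𝒰) (Y : Fin m → Ω → 𝒴)
    (hMarkov : CondIndepRV p (fun ω (i : Fin m) => Y i ω)
      (fun ω => (V ω, fun i : Fin m => U i ω)) X) :
    ∀ k : ℕ, 1 ≤ k → k ≤ m → GammaRD p X V U Y k = GammaRD p X V U Y 1 := by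
  intro k
  induction k with
  | zero => intro h _; omega
  | succ n ih =>
    intro _ hm
    rcases Nat.eq_zero_or_pos n with rfl | hn
    · rfl
    · rw [gamma_step p hp0 X V U Y hMarkov n hn (by omega)]
      exact ih hn (by omega)
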